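/- Let G be an additive abelian group, Q a finitely generated saturated submonoid of G, r a natural number, and φ : (Fin r → ℕ) →+ G an additive monoid homomorphism of Kummer type into Q. Then the induced ring homomorphism ℤ[Fin r → ℕ] → ℤ[Q] (given by mapDomain along the corestriction of φ to Q) is faithfully flat, and ℤ[Q] is a finitely generated module over ℤ[Fin r → ℕ]. -/

import Mathlib

/-- A submonoid `Q` of an additive abelian group `G` is *saturated* if every element `g` of the
subgroup of `G` generated by `Q` such that `n • g ∈ Q` for some integer `n ≥ 1` lies in `Q`. -/
def IsSaturated {G : Type*} [AddCommGroup G] (Q : AddSubmonoid G) : Prop :=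
  ∀ g ∈ AddSubgroup.closure (Q : Set G), (∃ n : ℤ, 1 ≤ n ∧ n • g ∈ Q) → g ∈ Q

/-- An additive monoid homomorphism `φ : (Fin r → ℕ) →+ G` is *of Kummer type into `Q`* if it is
injective, its image is contained in `Q`, and every `q ∈ Q` has a positive integer multiple in the
image of `φ`. -/
def IsKummerType {G : Type*} [AddCommGroup G] {r : ℕ} (φ : (Fin r → ℕ) →+ G)
    (Q : AddSubmonoid G) : Prop :=
  Function.Injective φ ∧ (∀ x, φ x ∈ Q) ∧
    ∀ q ∈ Q, ∃ n : ℤ, 1 ≤ n ∧ n • q ∈ Set.range φ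

lemma finsuppProdLEquiv_single' {α β M R : Type*} [Semiring R] [AddCommMonoid M] [Module R M]
    (a : α) (b : β) (m : M) :
    Finsupp.finsuppProdLEquiv R (Finsupp.single ((a, b) : α × β) m)
      = Finsupp.single a (Finsupp.single b m) := by
  classical
  ext x y
  show Finsupp.single ((a, b) : α × β) m (x, y) = _
  rcases eq_or_ne a x with rfl | h1
  · rcases eq_or_ne b y with rfl | h2
    · simp
    · simp [Finsupp.single_apply, h2]
  · simp [Finsupp.single_apply, h1]

section Phibar

variable {G : Type*} [AddCommGroup G] {r : ℕ}

/-- The `ℤ`-linear extension of `φ : ℕ^r →+ G` to `ℤ^r`. -/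
noncomputable def phibar (φ : (Fin r → ℕ) →+ G) : (Fin r → ℤ) →+ G where
  toFun v := ∑ i, v i • φ (Pi.single i 1)
  map_zero' := by simp
  map_add' v w := by
    simp only [Pi.add_apply, add_smul]
    rw [Finset.sum_add_distrib]

lemma phibar_coe (φ : (Fin r → ℕ) →+ G) (m : Fin r → ℕ) :
    phibar φ (fun i => (m i : ℤ)) = φ m := by
  have h1 : m = ∑ i, Pi.single i (m i) := by rw [Finset.univ_sum_single]
  have h2 : φ m = ∑ i, (m i) • φ (Pi.single i 1) := by
    conv_lhs => rw [h1]
    rw [map_sum]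
    refine Finset.sum_congr rfl fun i _ => ?_
    have : Pi.single i (m i) = m i • (Pi.single i 1 : Fin r → ℕ) := by
      ext j
      by_cases h : j = i <;> simp [Pi.single_apply, h]
    rw [this, map_nsmul]
  rw [h2]
  simp only [phibar, AddMonoidHom.coe_mk, ZeroHom.coe_mk, natCast_zsmul]

lemma phibar_eq_sub (φ : (Fin r → ℕ) →+ G) (v : Fin r → ℤ) :
    phibar φ v = φ (fun i => (v i).toNat) - φ (fun i => (-(v i)).toNat) := by
  have h : (fun i => (((v i).toNat : ℤ))) = v + fun i => (((-(v i)).toNat : ℤ)) := by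
    funext i
    simp only [Pi.add_apply]
    omega
  have := phibar_coe φ (fun i => (v i).toNat)
  rw [h, map_add, phibar_coe] at this
  rw [← this]
  abel

lemma phibar_injective {φ : (Fin r → ℕ) →+ G} (hinj : Function.Injective φ) :
    Function.Injective (phibar φ) := by
  rw [injective_iff_map_eq_zero]
  intro v hv
  rw [phibar_eq_sub, sub_eq_zero] at hv
  have := hinj hv
  funext i
  have h2 := congrFun this i
  simp only [Pi.zero_apply]
  omega

end Phibar
section Mem

variable {G : Type*} [AddCommGroup G] {r : ℕ} {φ : (Fin r → ℕ) →+ G} {Q : AddSubmonoid G}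

lemma phibar_mem_iff (hinj : Function.Injective φ) (hmem : ∀ x, φ x ∈ Q)
    (hk : ∀ q ∈ Q, ∃ n : ℤ, 1 ≤ n ∧ n • q ∈ Set.range φ) (v : Fin r → ℤ) :
    phibar φ v ∈ Q ↔ ∀ i, 0 ≤ v i := by
  constructor
  · intro hv
    obtain ⟨n, hn, w, hw⟩ := hk _ hv
    have h1 : phibar φ (n • v) = phibar φ (fun i => (w i : ℤ)) := by
      rw [map_zsmul, phibar_coe, hw]
    have h2 : n • v = fun i => (w i : ℤ) := phibar_injective hinj h1
    intro i
    have h3 := congrFun h2 i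
    simp only [Pi.smul_apply, smul_eq_mul] at h3
    nlinarith [Int.natCast_nonneg (w i)]
  · intro hv
    have : phibar φ v = φ (fun i => (v i).toNat) := by
      rw [← phibar_coe]
      congr 1
      funext i
      exact (Int.toNat_of_nonneg (hv i)).symm
    rw [this]
    exact hmem _

lemma exists_min (hQsat : IsSaturated Q) (hinj : Function.Injective φ)
    (hmem : ∀ x, φ x ∈ Q) (hk : ∀ q ∈ Q, ∃ n : ℤ, 1 ≤ n ∧ n • q ∈ Set.range φ)
    {q : G} (hq : q ∈ Q) :
    ∃ c : Fin r → ℤ, ∀ u : Fin r → ℤ, (q + phibar φ u ∈ Q ↔ ∀ i, c i ≤ u i) := by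
  obtain ⟨n, hn, w, hw⟩ := hk q hq
  set a : Fin r → ℤ := fun i => (w i : ℤ) with ha
  have hpa : phibar φ a = n • q := by rw [ha, phibar_coe, hw]
  refine ⟨fun i => -(a i / n), fun u => ?_⟩
  have key : (q + phibar φ u ∈ Q) ↔ ∀ i, 0 ≤ a i + n * u i := by
    have heq : phibar φ (a + n • u) = n • (q + phibar φ u) := by
      rw [map_add, map_zsmul, hpa, smul_add]
    constructor
    · intro h
      have h1 : n • (q + phibar φ u) ∈ Q := by
        have hsm : n • (q + phibar φ u) = n.toNat • (q + phibar φ u) := by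
          rw [← natCast_zsmul]
          congr 1
          omega
        rw [hsm]
        exact AddSubmonoid.nsmul_mem Q h _
      rw [← heq] at h1
      have h2 := (phibar_mem_iff hinj hmem hk _).1 h1
      intro i
      have := h2 i
      simpa using this
    · intro h
      have h1 : phibar φ (a + n • u) ∈ Q := by
        refine (phibar_mem_iff hinj hmem hk _).2 fun i => ?_
        simpa using h i
      rw [heq] at h1
      refine hQsat _ ?_ ⟨n, hn, h1⟩
      refine AddSubgroup.add_mem _ (AddSubgroup.subset_closure hq) ?_
      rw [phibar_eq_sub]
      exact AddSubgroup.sub_mem _ (AddSubgroup.subset_closure (hmem _))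
        (AddSubgroup.subset_closure (hmem _))
  rw [key]
  refine forall_congr' fun i => ?_
  show 0 ≤ a i + n * u i ↔ -(a i / n) ≤ u i
  have hn' : (0:ℤ) < n := by omega
  have hai : 0 ≤ a i := Int.natCast_nonneg _
  constructor
  · intro h
    have h1 : -u i ≤ a i / n := (Int.le_ediv_iff_mul_le hn').2 (by linarith)
    linarith
  · intro h
    have h1 : 0 ≤ a i % n := Int.emod_nonneg _ (by omega)
    have h2 : n * (a i / n) + a i % n = a i := Int.mul_ediv_add_emod _ _
    nlinarith [mul_le_mul_of_nonneg_left h (le_of_lt hn')]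

end Mem
open AddMonoidAlgebra in
theorem aux_kummer {G : Type*} [AddCommGroup G] (Q : AddSubmonoid G) (hQfg : Q.FG)
    (hQsat : IsSaturated Q) {r : ℕ} (φ : (Fin r → ℕ) →+ G)
    (hinj : Function.Injective φ) (hmem : ∀ x, φ x ∈ Q)
    (hk : ∀ q ∈ Q, ∃ n : ℤ, 1 ≤ n ∧ n • q ∈ Set.range φ) :
    letI := (AddMonoidAlgebra.mapDomainRingHom ℤ (φ.codRestrict Q hmem)).toAlgebra
    Module.FaithfullyFlat (AddMonoidAlgebra ℤ (Fin r → ℕ)) (AddMonoidAlgebra ℤ Q) ∧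
      Module.Finite (AddMonoidAlgebra ℤ (Fin r → ℕ)) (AddMonoidAlgebra ℤ Q) := by
  classical
  set ψ : (Fin r → ℕ) →+ Q := φ.codRestrict Q hmem with hψdef
  set f : AddMonoidAlgebra ℤ (Fin r → ℕ) →+* AddMonoidAlgebra ℤ Q :=
    AddMonoidAlgebra.mapDomainRingHom ℤ ψ with hfdef
  letI : Algebra (AddMonoidAlgebra ℤ (Fin r → ℕ)) (AddMonoidAlgebra ℤ Q) := f.toAlgebra
  set L : AddSubgroup G := (phibar φ).range with hLdef
  set π : G →+ G ⧸ L := QuotientAddGroup.mk' L with hπdef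
  have hπφ : ∀ m : Fin r → ℕ, π (φ m) = 0 := fun m =>
    (QuotientAddGroup.eq_zero_iff _).2 ⟨(fun i => (m i : ℤ)), phibar_coe φ m⟩
  -- minimal representatives of classes
  have hrho : ∀ t : ↥(π '' (Q : Set G)), ∃ q₀ : Q, π (q₀ : G) = (t : G ⧸ L) ∧
      ∀ u : Fin r → ℤ, ((q₀ : G) + phibar φ u ∈ Q ↔ ∀ i, 0 ≤ u i) := by
    rintro ⟨x, q, hq, rfl⟩
    obtain ⟨c, hc⟩ := exists_min hQsat hinj hmem hk hq
    have hcQ : q + phibar φ c ∈ Q := (hc c).2 fun i => le_refl _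
    refine ⟨⟨q + phibar φ c, hcQ⟩, ?_, ?_⟩
    · show π (q + phibar φ c) = π q
      have h0 : π (phibar φ c) = 0 := (QuotientAddGroup.eq_zero_iff _).2 ⟨c, rfl⟩
      rw [map_add, h0, add_zero]
    · intro u
      have h1 : q + phibar φ c + phibar φ u = q + phibar φ (c + u) := by
        rw [map_add, add_assoc]
      show q + phibar φ c + phibar φ u ∈ Q ↔ _
      rw [h1, hc (c + u)]
      constructor
      · intro h i
        have := h i
        simp only [Pi.add_apply] at this
        omega
      · intro h i
        have := h i
        simp only [Pi.add_apply]
        omega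
  choose ρ hρ1 hρ2 using hrho
  -- the equivariant bijection
  set EE : ↥(π '' (Q : Set G)) × (Fin r → ℕ) → Q := fun p => ρ p.1 + ψ p.2 with hEEdef
  have hcoeEE : ∀ p, ((EE p : Q) : G) = (ρ p.1 : G) + φ p.2 := fun p => rfl
  have hbij : Function.Bijective EE := by
    constructor
    · rintro ⟨t, m⟩ ⟨t', m'⟩ h
      have hG : (ρ t : G) + φ m = (ρ t' : G) + φ m' := by
        have := congrArg (fun x : Q => (x : G)) h
        simpa [hcoeEE] using this
      have ht : t = t' := by
        apply Subtype.ext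
        have h2 := congrArg π hG
        rw [map_add, map_add, hπφ, hπφ, add_zero, add_zero, hρ1 t, hρ1 t'] at h2
        exact h2
      subst ht
      have hm : m = m' := hinj (by exact add_left_cancel hG)
      rw [hm]
    · intro q
      have htm : (π (q : G)) ∈ π '' (Q : Set G) := ⟨(q : G), q.2, rfl⟩
      set t : ↥(π '' (Q : Set G)) := ⟨π (q : G), htm⟩ with htdef
      have h1 : π ((ρ t : Q) : G) = π (q : G) := hρ1 t
      have h2 : ((q : G) - (ρ t : G)) ∈ L := by
        have := (QuotientAddGroup.eq_iff_sub_mem).1 h1.symm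
        exact this
      obtain ⟨u, hu⟩ := h2
      have h3 : (ρ t : G) + phibar φ u ∈ Q := by
        rw [hu]
        have : (ρ t : G) + ((q : G) - (ρ t : G)) = (q : G) := by abel
        rw [this]
        exact q.2
      have h4 := (hρ2 t u).1 h3
      refine ⟨(t, fun i => (u i).toNat), ?_⟩
      apply Subtype.ext
      rw [hcoeEE]
      show (ρ t : G) + φ (fun i => (u i).toNat) = (q : G)
      have h5 : φ (fun i => (u i).toNat) = phibar φ u := by
        rw [← phibar_coe]
        congr 1
        funext i
        exact Int.toNat_of_nonneg (h4 i)
      rw [h5, hu]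
      abel
  set E : (↥(π '' (Q : Set G)) × (Fin r → ℕ)) ≃ Q := Equiv.ofBijective EE hbij with hEdef
  have hEapp : ∀ p, E p = ρ p.1 + ψ p.2 := fun p => rfl
  have hEsymm : ∀ (m : Fin r → ℕ) (q : Q),
      E.symm (ψ m + q) = ((E.symm q).1, m + (E.symm q).2) := by
    intro m q
    apply E.injective
    rw [Equiv.apply_symm_apply, hEapp]
    have hq : ρ (E.symm q).1 + ψ (E.symm q).2 = q := by
      rw [← hEapp]
      exact E.apply_symm_apply q
    rw [map_add]
    conv_lhs => rw [← hq]
    abel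
  -- the ℤ-linear equivalence with the Finsupp model
  set g0 := (AddMonoidAlgebra.coeffLinearEquiv ℤ).trans ((Finsupp.domLCongr (M := ℤ) (R := ℤ) E.symm).trans
    ((Finsupp.finsuppProdLEquiv ℤ).trans
      (Finsupp.mapRange.linearEquiv (AddMonoidAlgebra.coeffLinearEquiv ℤ).symm))) with hg0def
  have hg0single : ∀ (q : Q) (z : ℤ), g0 (AddMonoidAlgebra.single q z)
      = Finsupp.single (E.symm q).1 (AddMonoidAlgebra.single (E.symm q).2 z) := by
    intro q z
    rw [hg0def, LinearEquiv.trans_apply, LinearEquiv.trans_apply, LinearEquiv.trans_apply,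
      AddMonoidAlgebra.coeffLinearEquiv_apply, AddMonoidAlgebra.coeff_single, Finsupp.domLCongr_single]
    rw [show E.symm q = ((E.symm q).1, (E.symm q).2) from rfl, finsuppProdLEquiv_single']
    rw [Finsupp.mapRange.linearEquiv_apply, Finsupp.mapRange_single]
    rfl
  have hfs : ∀ (m : Fin r → ℕ) (z : ℤ),
      f (AddMonoidAlgebra.single m z) = AddMonoidAlgebra.single (ψ m) z := by
    intro m z
    show AddMonoidAlgebra.mapDomain ψ (AddMonoidAlgebra.single m z) = _
    rw [AddMonoidAlgebra.mapDomain_single]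
  have hmulsingle : ∀ (m : Fin r → ℕ) (z : ℤ) (q : Q) (w : ℤ),
      (AddMonoidAlgebra.single m z : AddMonoidAlgebra ℤ (Fin r → ℕ)) •
        (AddMonoidAlgebra.single q w : AddMonoidAlgebra ℤ Q)
        = AddMonoidAlgebra.single (ψ m + q) (z * w) := by
    intro m z q w
    have h1 : (AddMonoidAlgebra.single m z : AddMonoidAlgebra ℤ (Fin r → ℕ)) •
        (AddMonoidAlgebra.single q w : AddMonoidAlgebra ℤ Q)
        = f (AddMonoidAlgebra.single m z) * AddMonoidAlgebra.single q w := rfl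
    rw [h1, hfs]
    rw [AddMonoidAlgebra.single_mul_single]
  have hsm : ∀ (x : AddMonoidAlgebra ℤ (Fin r → ℕ)) (t : ↥(π '' (Q : Set G)))
      (y : AddMonoidAlgebra ℤ (Fin r → ℕ)),
      x • (Finsupp.single t y : ↥(π '' (Q : Set G)) →₀ AddMonoidAlgebra ℤ (Fin r → ℕ))
        = Finsupp.single t (x * y) := by
    intro x t y
    rw [Finsupp.smul_single, smul_eq_mul]
  have hs : ∀ (x : AddMonoidAlgebra ℤ (Fin r → ℕ)) (v : AddMonoidAlgebra ℤ Q),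
      g0 (x • v) = x • (show ↥(π '' (Q : Set G)) →₀ AddMonoidAlgebra ℤ (Fin r → ℕ)
        from g0 v) := by
    intro x v
    induction x using AddMonoidAlgebra.induction_linear with
    | zero => rw [zero_smul, map_zero, zero_smul]
    | add a b ha hb => rw [add_smul, map_add, ha, hb, add_smul]
    | single m z =>
      induction v using AddMonoidAlgebra.induction_linear with
      | zero => rw [smul_zero, map_zero, smul_zero]
      | add u w hu hw => rw [smul_add, map_add, hu, hw, map_add, smul_add]
      | single q w =>
        rw [hmulsingle, hg0single, hg0single, hEsymm, hsm,
          AddMonoidAlgebra.single_mul_single]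
  set glin : (AddMonoidAlgebra ℤ Q) ≃ₗ[AddMonoidAlgebra ℤ (Fin r → ℕ)]
      (↥(π '' (Q : Set G)) →₀ AddMonoidAlgebra ℤ (Fin r → ℕ)) :=
    { toFun := g0
      map_add' := g0.map_add
      map_smul' := hs
      invFun := g0.symm
      left_inv := g0.left_inv
      right_inv := g0.right_inv } with hglindef
  set bas : Module.Basis (↥(π '' (Q : Set G))) (AddMonoidAlgebra ℤ (Fin r → ℕ))
      (AddMonoidAlgebra ℤ Q) := Module.Basis.ofRepr glin with hbasdef
  -- finiteness of the index set
  have hTfin : (π '' (Q : Set G)).Finite := by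
    obtain ⟨S, hS⟩ := hQfg
    have hSQ : ∀ s ∈ S, (s : G) ∈ Q := fun s hs => hS ▸ AddSubmonoid.subset_closure hs
    have hsL : ∀ s ∈ S, ∃ n : ℕ, 0 < n ∧ n • s ∈ L := by
      intro s hs
      obtain ⟨n, hn, w, hw⟩ := hk s (hSQ s hs)
      refine ⟨n.toNat, by omega, ?_⟩
      have h1 : (n.toNat • s) = n • s := by
        rw [← natCast_zsmul]
        congr 1
        omega
      rw [h1]
      exact ⟨fun i => (w i : ℤ), by rw [phibar_coe, hw]⟩
    choose! n hn hnL using hsL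
    set N : ℕ := ∏ s ∈ S, n s with hNdef
    have hN : 0 < N := Finset.prod_pos hn
    have hNL : ∀ s ∈ S, N • s ∈ L := by
      intro s hs
      obtain ⟨k, hk'⟩ := Finset.dvd_prod_of_mem n hs
      rw [show N = n s * k from hk', mul_comm (n s) k, mul_smul]
      exact AddSubgroup.nsmul_mem _ (hnL s hs) _
    have hrep : ∀ q ∈ Q, ∃ k : G → ℕ, q = ∑ s ∈ S, k s • s := by
      intro q hq
      rw [← hS] at hq
      induction hq using AddSubmonoid.closure_induction with
      | mem x hx =>
        refine ⟨fun g => if g = x then 1 else 0, ?_⟩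
        have h1 : ∀ s ∈ S, (if s = x then (1:ℕ) else 0) • s
            = if s = x then s else 0 := by
          intro s _
          split <;> simp
        rw [Finset.sum_congr rfl h1, Finset.sum_ite_eq' S x (fun y => y), if_pos (Finset.mem_coe.1 hx)]
      | zero => exact ⟨fun _ => 0, by simp⟩
      | add x y hx' hy' ihx ihy =>
        obtain ⟨k1, hk1⟩ := ihx
        obtain ⟨k2, hk2⟩ := ihy
        refine ⟨k1 + k2, ?_⟩
        simp only [Pi.add_apply, add_smul, Finset.sum_add_distrib, ← hk1, ← hk2]
    have himg : ∀ q ∈ Q, ∃ k : G → ℕ, (∀ s, k s < N) ∧ π q = π (∑ s ∈ S, k s • s) := by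
      intro q hq
      obtain ⟨k, hkq⟩ := hrep q hq
      refine ⟨fun s => k s % N, fun s => Nat.mod_lt _ hN, ?_⟩
      have hdiff : q - ∑ s ∈ S, (k s % N) • s ∈ L := by
        rw [hkq]
        rw [← Finset.sum_sub_distrib]
        refine AddSubgroup.sum_mem _ fun s hs => ?_
        have h1 : k s • s - (k s % N) • s = (N * (k s / N)) • s := by
          have h2 : k s = k s % N + N * (k s / N) := (Nat.mod_add_div _ _).symm
          calc k s • s - (k s % N) • s
              = (k s % N + N * (k s / N)) • s - (k s % N) • s := by rw [← h2]
            _ = (N * (k s / N)) • s := by rw [add_smul]; abel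
        rw [h1, mul_comm, mul_smul]
        exact AddSubgroup.nsmul_mem _ (hNL s hs) _
      exact (QuotientAddGroup.eq_iff_sub_mem).2 hdiff
    refine Set.Finite.subset (Set.finite_range
      (fun k : (↥S → Fin N) => π (∑ s ∈ S.attach, ((k s : ℕ)) • (s : G)))) ?_
    rintro x ⟨q, hq, rfl⟩
    obtain ⟨k, hk1, hk2⟩ := himg q hq
    refine ⟨fun s => ⟨k s, hk1 s⟩, ?_⟩
    show π (∑ s ∈ S.attach, (k (s : G)) • (s : G)) = π q
    rw [Finset.sum_attach S (fun s => k s • s)]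
    exact hk2.symm
  haveI : Finite ↥(π '' (Q : Set G)) := hTfin.to_subtype
  haveI : Nonempty ↥Q := ⟨0⟩
  haveI : Module.Free (AddMonoidAlgebra ℤ (Fin r → ℕ)) (AddMonoidAlgebra ℤ Q) :=
    Module.Free.of_basis bas
  exact ⟨inferInstance, Module.Finite.of_basis bas⟩

/-- Lemma 2.6: a Kummer-type morphism from a free monoid `ℕ^r` into a finitely generated
saturated submonoid `Q` induces a faithfully flat, module-finite map `ℤ[ℕ^r] → ℤ[Q]` of monoid
algebras. -/
theorem faithfullyFlat_finite_of_kummerType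
    {G : Type*} [AddCommGroup G] (Q : AddSubmonoid G) (hQfg : Q.FG) (hQsat : IsSaturated Q)
    {r : ℕ} (φ : (Fin r → ℕ) →+ G) (hφ : IsKummerType φ Q) :
    let ψ : (Fin r → ℕ) →+ Q := (φ.codRestrict Q hφ.2.1)
    let f : AddMonoidAlgebra ℤ (Fin r → ℕ) →+* AddMonoidAlgebra ℤ Q :=
      AddMonoidAlgebra.mapDomainRingHom ℤ ψ
    letI := f.toAlgebra
    Module.FaithfullyFlat (AddMonoidAlgebra ℤ (Fin r → ℕ)) (AddMonoidAlgebra ℤ Q) ∧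
      Module.Finite (AddMonoidAlgebra ℤ (Fin r → ℕ)) (AddMonoidAlgebra ℤ Q) := by
  intro ψ f
  exact aux_kummer Q hQfg hQsat φ hφ.1 hφ.2.1 hφ.2.2
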